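/- Let n be a natural number and let I be a subsemilattice of P(n) that is also an initial segment (downward closed subset) of P(n). Then for any nonempty u ∈ I, the semilattice [u, ∞)_I × {0,1} (the upper set of u in I, times the two-element chain, ordered lexicographically/componentwise) is isomorphic to an initial segment of P(n). -/

import Mathlib

/-- Let `I` be a subsemilattice of `P(n)` (closed under intersections) which is
also an initial segment (downward closed) of `P(n)`. Then for any nonempty
`u ∈ I`, the semilattice `[u, ∞)_I × {0,1}` (the upper set of `u` in `I` times
the two-element chain, with the componentwise/product order) is isomorphic to
an initial segment of `P(n)`. -/
theorem stmt_2 (n : ℕ) (I : Set (Set (Fin n)))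
    (hdown : ∀ s ∈ I, ∀ t, t ⊆ s → t ∈ I)
    (hmeet : ∀ s ∈ I, ∀ t ∈ I, s ∩ t ∈ I)
    (u : Set (Fin n)) (hu : u ∈ I) (hne : u.Nonempty) :
    ∃ J : Set (Set (Fin n)), (∀ s ∈ J, ∀ t, t ⊆ s → t ∈ J) ∧
      Nonempty (({w : Set (Fin n) // w ∈ I ∧ u ⊆ w} × Bool) ≃o {s : Set (Fin n) // s ∈ J}) := by
  classical
  obtain ⟨x, hx⟩ := hne
  set g : ({w : Set (Fin n) // w ∈ I ∧ u ⊆ w} × Bool) → Set (Fin n) :=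
    fun p => (p.1.1 \ u) ∪ (if p.2 then {x} else ∅) with hg
  have key : ∀ p q, g p ⊆ g q ↔ p ≤ q := by
    rintro ⟨⟨w, hwI, hw⟩, b⟩ ⟨⟨w', hwI', hw'⟩, b'⟩
    simp only [hg, Prod.le_def, Subtype.mk_le_mk]
    constructor
    · intro h
      constructor
      · intro a ha
        by_cases hau : a ∈ u
        · exact hw' hau
        · have h2 : a ∈ (w' \ u) ∪ (if b' then ({x} : Set (Fin n)) else ∅) :=
            h (Or.inl ⟨ha, hau⟩)
          rcases h2 with h1 | h2
          · exact h1.1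
          · exfalso
            cases b' <;> simp at h2
            exact hau (h2 ▸ hx)
      · cases b
        · exact Bool.false_le _
        · cases b'
          · exfalso
            have h2 : x ∈ (w' \ u) ∪ (if false then ({x} : Set (Fin n)) else ∅) :=
              h (Or.inr (by simp))
            simp at h2
            exact h2.2 hx
          · exact le_refl _
    · rintro ⟨h1, h2⟩
      apply Set.union_subset_union (Set.diff_subset_diff_left h1)
      cases b
      · simp
      · have hb' : b' = true := by
          cases b'
          · exact absurd h2 (by decide)
          · rfl
        simp [hb']
  have hinj : Function.Injective g := by
    intro p q hpq
    exact le_antisymm ((key p q).1 hpq.le) ((key q p).1 hpq.ge)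
  refine ⟨Set.range g, ?_, ⟨⟨Equiv.ofInjective g hinj, ?_⟩⟩⟩
  · rintro s ⟨⟨⟨w, hwI, hw⟩, b⟩, rfl⟩ t ht
    -- t ⊆ (w \ u) ∪ (if b then {x} else ∅)
    have htw : t \ {x} ⊆ w \ u := by
      intro a ⟨hat, hax⟩
      have := ht hat
      rcases this with h1 | h2
      · exact h1
      · exfalso
        cases b <;> simp at h2
        exact hax h2
    have hw'I : (t \ {x}) ∪ u ∈ I := by
      apply hdown w hwI
      exact Set.union_subset (htw.trans Set.diff_subset) hw
    have hdisj : (t \ {x}) \ u = t \ {x} := by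
      ext a
      simp only [Set.mem_diff]
      exact ⟨fun h => h.1, fun h => ⟨h, fun hau => (htw h).2 hau⟩⟩
    refine ⟨⟨⟨(t \ {x}) ∪ u, hw'I, Set.subset_union_right⟩, decide (x ∈ t)⟩, ?_⟩
    simp only [hg]
    have hdiff : ((t \ {x}) ∪ u) \ u = t \ {x} := by
      rw [Set.union_diff_right, hdisj]
    rw [hdiff]
    by_cases hxt : x ∈ t
    · simp only [hxt, decide_true, if_true]
      ext a
      by_cases hax : a = x <;> simp [Set.mem_diff, hax, hxt]
    · simp only [hxt, decide_false, if_false]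
      ext a
      by_cases hax : a = x <;> simp [Set.mem_diff, hax, hxt]
  · intro p q
    exact key p q
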